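/- On the bicrossproduct H = kM ⋉ k(G), the conjugate-linear map defined on basis elements by (s⊗δ_u)* = s^i ⊗ δ_{s▷u} reverses the order of multiplication: ((s⊗δ_u)(t⊗δ_v))* = (t⊗δ_v)*(s⊗δ_u)*. -/

import Mathlib

/-- Data of an almost group: a binary operation, an `i` operation, and a subset `J`. -/
structure AlmostGroupData (G : Type*) where
  mul : G → G → G
  inv : G → G
  J : Set G

/-- The axioms of an almost group (Definition 2.1). -/
structure IsAlmostGroup {G : Type*} (D : AlmostGroupData G) : Prop where
  mul_assoc : ∀ a b c, D.mul (D.mul a b) c = D.mul a (D.mul b c)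
  inv_bijective : Function.Bijective D.inv
  J_mul_closed : ∀ a ∈ D.J, ∀ b ∈ D.J, D.mul a b ∈ D.J
  J_inv_closed : ∀ a ∈ D.J, D.inv a ∈ D.J
  inv_mul : ∀ a b, D.inv (D.mul a b) = D.mul (D.inv b) (D.inv a)
  J_central : ∀ j ∈ D.J, ∀ g, D.mul j g = D.mul g j
  mul_inv_comm : ∀ g, D.mul g (D.inv g) = D.mul (D.inv g) g
  mul_inv_mem : ∀ g, D.mul g (D.inv g) ∈ D.J
  inv_inv : ∀ g, D.inv (D.inv g) = g

/-- Data of a matched pair of almost groups: two almost groups and two actions. -/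
structure MatchedPairData (G M : Type*) where
  DG : AlmostGroupData G
  DM : AlmostGroupData M
  act : M → G → G      -- ▷ : M × G → G
  coact : M → G → M    -- ◁ : M × G → M

/-- The axioms of a matched pair of almost groups (Definition 4.1). -/
structure IsMatchedPair {G M : Type*} (P : MatchedPairData G M) : Prop where
  almostGroup_G : IsAlmostGroup P.DG
  almostGroup_M : IsAlmostGroup P.DM
  coact_mul : ∀ s u v, P.coact s (P.DG.mul u v) = P.coact (P.coact s u) v
  mul_coact : ∀ s t u, P.coact (P.DM.mul s t) u =
      P.DM.mul (P.coact s (P.act t u)) (P.coact t u)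
  mul_act : ∀ s t u, P.act (P.DM.mul s t) u = P.act s (P.act t u)
  act_mul : ∀ s u v, P.act s (P.DG.mul u v) =
      P.DG.mul (P.act s u) (P.act (P.coact s u) v)
  inv_act : ∀ s u, P.act (P.DM.inv (P.coact s u)) (P.DG.inv (P.act s u)) = P.DG.inv u
  inv_coact : ∀ s u, P.coact (P.DM.inv (P.coact s u)) (P.DG.inv (P.act s u)) = P.DM.inv s
  actJM : ∀ j ∈ P.DM.J, ∀ u, P.act j u = u
  coactJM : ∀ j ∈ P.DM.J, ∀ u, P.coact j u = j
  actJG : ∀ s, ∀ j ∈ P.DG.J, P.act s j = j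
  coactJG : ∀ s, ∀ j ∈ P.DG.J, P.coact s j = s

variable {G M k : Type*} [Fintype G] [Fintype M] [DecidableEq G] [DecidableEq M] [Field k]
variable (P : MatchedPairData G M)

/-- The product of `H = kM ⋉ k(G)`, given on the basis by
`(s ⊗ δ_u)(t ⊗ δ_v) = δ_{u, t ▷ v} (st ⊗ δ_v)`.  Here `H` is modelled as `M × G → k`,
with `(s, u)` indexing the basis vector `s ⊗ δ_u`. -/
def mulH (F K : M × G → k) : M × G → k := fun p =>
  ∑ s : M, ∑ t : M, if P.DM.mul s t = p.1 then F (s, P.act t p.2) * K (t, p.2) else 0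

/-- The coproduct of `H = kM ⋉ k(G)`, given on the basis by
`Δ(s ⊗ δ_u) = Σ_{xy=u} (s ⊗ δ_x) ⊗ ((s ◁ x) ⊗ δ_y)`.  `H ⊗ H` is modelled as
`(M × G) × (M × G) → k`. -/
def DeltaH (F : M × G → k) : (M × G) × (M × G) → k := fun q =>
  if q.2.1 = P.coact q.1.1 q.1.2 then F (q.1.1, P.DG.mul q.1.2 q.2.2) else 0

/-- The `*` operation on basis elements: `(s ⊗ δ_u)* = s^i ⊗ δ_{s ▷ u}`;
this map is an involution of `M × G`. -/
def bstar (b : M × G) : M × G := (P.DM.inv b.1, P.act b.1 b.2)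

/-- The conjugate-linear `*` operation on `H = kM ⋉ k(G)`. -/
def starH [StarRing k] (F : M × G → k) : M × G → k := fun p => star (F (bstar P p))

/-- On the bicrossproduct `H = kM ⋉ k(G)`, the conjugate-linear map defined on basis
elements by `(s ⊗ δ_u)* = s^i ⊗ δ_{s ▷ u}` reverses the order of multiplication:
`(FK)* = K* F*`. -/
theorem bicross_star_antimultiplicative [StarRing k] (hP : IsMatchedPair P)
    (F K : M × G → k) :
    starH P (mulH P F K) = mulH P (starH P K) (starH P F) := by
  classical
  have hM := hP.almostGroup_M
  -- key: s^i ▷ (s ▷ u) = u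
  have hcancel : ∀ (s : M) (u : G), P.act (P.DM.inv s) (P.act s u) = u := by
    intro s u
    have h1 : P.act (P.DM.mul (P.DM.inv s) s) u = P.act (P.DM.inv s) (P.act s u) :=
      hP.mul_act _ _ _
    have h2 : P.DM.mul (P.DM.inv s) s ∈ P.DM.J := by
      rw [← hM.mul_inv_comm]; exact hM.mul_inv_mem s
    rw [← h1, hP.actJM _ h2]
  have hcancel' : ∀ (s : M) (u : G), P.act s (P.act (P.DM.inv s) u) = u := by
    intro s u
    have h1 : P.act (P.DM.mul s (P.DM.inv s)) u = P.act s (P.act (P.DM.inv s) u) :=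
      hP.mul_act _ _ _
    rw [← h1, hP.actJM _ (hM.mul_inv_mem s)]
  have hinj : Function.Injective P.DM.inv := hM.inv_bijective.1
  funext p
  simp only [starH, mulH, bstar]
  rw [star_sum]
  simp only [star_sum, apply_ite (star : k → k), star_zero, star_mul]
  rw [← Finset.sum_product', ← Finset.sum_product']
  refine Finset.sum_nbij' (fun q => (P.DM.inv q.2, P.DM.inv q.1))
    (fun q => (P.DM.inv q.2, P.DM.inv q.1)) (fun _ _ => Finset.mem_univ _)
    (fun _ _ => Finset.mem_univ _) ?_ ?_ ?_
  · intro q _; simp [hM.inv_inv]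
  · intro q _; simp [hM.inv_inv]
  · intro q _
    obtain ⟨s, t⟩ := q
    simp only
    by_cases h : P.DM.mul s t = P.DM.inv p.1
    · have hst : P.DM.mul (P.DM.inv t) (P.DM.inv s) = p.1 := by
        rw [← hM.inv_mul]
        have := congrArg P.DM.inv h
        rwa [hM.inv_inv] at this
      simp only [if_pos hst, h, eq_self_iff_true, if_true, star_mul]
      have h1 : P.act p.1 p.2 = P.act (P.DM.inv t) (P.act (P.DM.inv s) p.2) := by
        rw [← hP.mul_act, hst]
      have h2 : P.act t (P.act (P.DM.inv t) (P.act (P.DM.inv s) p.2))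
          = P.act (P.DM.inv s) p.2 := by
        exact hcancel' _ _
      rw [h1, h2, hM.inv_inv, hM.inv_inv]
    · have hst : ¬ P.DM.mul (P.DM.inv t) (P.DM.inv s) = p.1 := by
        intro hc; apply h
        rw [← hM.inv_mul] at hc
        have := congrArg P.DM.inv hc
        rwa [hM.inv_inv] at this
      simp only [if_neg hst, h, if_false, star_zero]
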